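/- Let M_0 and M_1 be the 4×4 upper unitriangular integer matrices where M_0 has 1s in positions (1,2) and (3,4) and M_1 has a 1 in position (2,3) (other off-diagonal entries zero). For a binary word X let M_X be the ordered product of generators. Then M_X has first row (1, N_0(X), N_{01}(X), N_{010}(X)), second row (0, 1, N_1(X), N_{10}(X)), third row (0,0,1,N_0(X)), and fourth row (0,0,0,1). -/
import Mathlib

def patCount (w X : List Bool) : ℕ := X.sublists.count w

def Mgen : Bool → Matrix (Fin 4) (Fin 4) ℤ
  | false => !![1, 1, 0, 0; 0, 1, 0, 0; 0, 0, 1, 1; 0, 0, 0, 1]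
  | true  => !![1, 0, 0, 0; 0, 1, 1, 0; 0, 0, 1, 0; 0, 0, 0, 1]

def MX (X : List Bool) : Matrix (Fin 4) (Fin 4) ℤ := (X.map Mgen).prod

lemma patCount_nil (X : List Bool) : patCount [] X = 1 := by
  induction X using List.reverseRecOn with
  | nil => rfl
  | append_singleton Y a ih =>
    unfold patCount at *
    rw [List.sublists_concat, List.count_append, ih]
    have : List.count ([] : List Bool) (Y.sublists.map (· ++ [a])) = 0 := by
      apply List.count_eq_zero_of_not_mem
      simp
    omega

lemma patCount_concat_same (w : List Bool) (a : Bool) (Y : List Bool) :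
    patCount (w ++ [a]) (Y ++ [a]) = patCount (w ++ [a]) Y + patCount w Y := by
  unfold patCount
  rw [List.sublists_concat, List.count_append]
  congr 1
  induction Y.sublists with
  | nil => rfl
  | cons x l ih => simp [List.count_cons, ih]

lemma patCount_concat_ne (w : List Bool) (a : Bool) (Y : List Bool)
    (h : w.getLast? ≠ some a) : patCount w (Y ++ [a]) = patCount w Y := by
  unfold patCount
  rw [List.sublists_concat, List.count_append]
  have : List.count w (Y.sublists.map (· ++ [a])) = 0 := by
    apply List.count_eq_zero_of_not_mem
    intro hw
    rcases List.mem_map.1 hw with ⟨y, -, rfl⟩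
    exact h (by simp)
  omega

theorem heisenberg4_pattern_counts (X : List Bool) :
    MX X = !![1, (patCount [false] X : ℤ), (patCount [false, true] X : ℤ),
                (patCount [false, true, false] X : ℤ);
              0, 1, (patCount [true] X : ℤ), (patCount [true, false] X : ℤ);
              0, 0, 1, (patCount [false] X : ℤ);
              0, 0, 0, 1] := by
  induction X using List.reverseRecOn with
  | nil =>
    have h : ∀ w : List Bool, w ≠ [] → patCount w [] = 0 := by
      intro w hw; simp [patCount, List.count_eq_zero_of_not_mem, hw]
    rw [h _ (by simp), h _ (by simp), h _ (by simp), h _ (by simp), h _ (by simp)]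
    show (1 : Matrix (Fin 4) (Fin 4) ℤ) = _
    ext i j
    fin_cases i <;> fin_cases j <;> rfl
  | append_singleton Y a ih =>
    have hM : MX (Y ++ [a]) = MX Y * Mgen a := by
      simp [MX]
    rw [hM, ih]
    cases a with
    | false =>
      have h0 := patCount_concat_same [] false Y
      rw [patCount_nil] at h0
      have h010 := patCount_concat_same [false, true] false Y
      have h10 := patCount_concat_same [true] false Y
      have h01 := patCount_concat_ne [false, true] false Y (by simp)
      have h1 := patCount_concat_ne [true] false Y (by simp)
      simp only [List.cons_append, List.nil_append] at h0 h010 h10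
      ext i j
      fin_cases i <;> fin_cases j <;>
        simp [Mgen, Matrix.mul_apply, Fin.sum_univ_four, Matrix.vecHead,
          Matrix.vecTail, h0, h010, h10, h01, h1] <;>
        ring
    | true =>
      have h1 := patCount_concat_same [] true Y
      rw [patCount_nil] at h1
      have h01 := patCount_concat_same [false] true Y
      have h0 := patCount_concat_ne [false] true Y (by simp)
      have h010 := patCount_concat_ne [false, true, false] true Y (by simp)
      have h10 := patCount_concat_ne [true, false] true Y (by simp)
      simp only [List.cons_append, List.nil_append] at h1 h01
      ext i j
      fin_cases i <;> fin_cases j <;>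
        simp [Mgen, Matrix.mul_apply, Fin.sum_univ_four, Matrix.vecHead,
          Matrix.vecTail, h0, h010, h10, h01, h1] <;>
        ring
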